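/- Let Γ be a countable group acting by measure-preserving transformations on a standard probability space (Ω, μ), let φ be an invariant random positive definite function on Γ over this action, and let τ(γ) = ∫_Ω φ(ω)(γ) dμ(ω). Suppose |τ(γ)| = 1 for every γ ∈ Γ. Then for almost every ω ∈ Ω and every γ ∈ Γ one has φ(ω)(γ) = τ(γ); that is, any i.r.p.d.f. integrating to a character taking values only on the boundary of the unit disk is constant. (In particular, the trivial character and, on S_∞, the alternating character are disintegration rigid.) -/

import Mathlib

open MeasureTheory
open scoped ComplexOrder

/-- A function `φ : Γ → ℂ` is positive definite if for every `n` and every tuple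
`g : Fin n → Γ`, the matrix `[φ((g j)⁻¹ * g i)]` is positive semidefinite. -/
def IsPositiveDefinite {Γ : Type*} [Group Γ] (φ : Γ → ℂ) : Prop :=
  ∀ (n : ℕ) (g : Fin n → Γ), (Matrix.of fun i j : Fin n => φ ((g j)⁻¹ * g i)).PosSemidef

/-- A normalized positive definite function. -/
def IsNormalizedPositiveDefinite {Γ : Type*} [Group Γ] (φ : Γ → ℂ) : Prop :=
  IsPositiveDefinite φ ∧ φ 1 = 1

/-- A normalized positive definite function is bounded by 1 in absolute value. -/
lemma npd_abs_le_one {Γ : Type*} [Group Γ] {φ : Γ → ℂ}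
    (h : IsNormalizedPositiveDefinite φ) (γ : Γ) : ‖φ γ‖ ≤ 1 := by
  obtain ⟨hpd, hone⟩ := h
  have hM := hpd 2 ![1, γ]
  by_cases hz : φ γ = 0
  · simp [hz]
  set a : ℝ := ‖φ γ‖ with hadef
  have ha : (a:ℂ) ≠ 0 := by simpa [hadef] using hz
  set c : ℂ := (starRingEnd ℂ) (φ γ) / a with hc
  have hpos := hM.dotProduct_mulVec_nonneg ![c, -1]
  have h01 : φ (γ⁻¹) = (starRingEnd ℂ) (φ γ) := by
    have := congrFun (congrFun hM.1 0) 1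
    simpa [Matrix.conjTranspose_apply, Matrix.of_apply] using this.symm
  have hsq : φ γ * (starRingEnd ℂ) (φ γ) = (a:ℂ)^2 := by
    rw [Complex.mul_conj, hadef]
    norm_cast
    rw [Complex.normSq_eq_norm_sq]
  have hcc : (starRingEnd ℂ) c = φ γ / a := by
    rw [hc]; simp [map_div₀]
  have hexp : dotProduct (star ![c, -1])
      ((Matrix.of fun i j : Fin 2 => φ ((![1, γ] j)⁻¹ * ![1, γ] i)).mulVec ![c, -1])
      = 2 - 2 * a := by
    simp only [dotProduct, Matrix.mulVec, Fin.sum_univ_two, Matrix.of_apply,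
      Matrix.cons_val_zero, Matrix.cons_val_one, Matrix.head_cons, Pi.star_apply,
      star_neg, star_one, inv_one, one_mul, mul_one]
    simp only [Complex.star_def, inv_mul_cancel, map_div₀, Complex.conj_conj, Complex.conj_ofReal, hone, h01, hcc, hc]
    field_simp [hone]
    linear_combination (1 - 2*(a:ℂ)) * hsq
  rw [hexp] at hpos
  have hre := hpos.1
  simp at hre
  linarith [hre]

/-- A measurable function bounded by 1 whose integral has modulus 1 is a.e. equal to
its integral. -/
lemma ae_eq_integral_of_abs_le_one {Ω : Type*} [MeasurableSpace Ω]
    (μ : Measure Ω) [IsProbabilityMeasure μ] {f : Ω → ℂ}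
    (hm : Measurable f) (hb : ∀ᵐ ω ∂μ, ‖f ω‖ ≤ 1)
    (hmod : ‖∫ ω, f ω ∂μ‖ = 1) :
    ∀ᵐ ω ∂μ, f ω = ∫ ω', f ω' ∂μ := by
  set c : ℂ := ∫ ω, f ω ∂μ with hcdef
  have hfint : Integrable f μ := by
    apply Integrable.mono' (integrable_const (1 : ℝ)) hm.aestronglyMeasurable
    filter_upwards [hb] with ω hω
    simpa using hω
  have hre_int : Integrable (fun ω => ((starRingEnd ℂ) c * f ω).re) μ :=
    (hfint.const_mul _).re
  set g : Ω → ℝ := fun ω => 1 - ((starRingEnd ℂ) c * f ω).re with hg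
  have hgint : Integrable g μ := (integrable_const 1).sub hre_int
  have hgnn : ∀ᵐ ω ∂μ, 0 ≤ g ω := by
    filter_upwards [hb] with ω hω
    have h1 : ((starRingEnd ℂ) c * f ω).re ≤ ‖(starRingEnd ℂ) c * f ω‖ :=
      Complex.re_le_norm _
    have h2 : ‖(starRingEnd ℂ) c * f ω‖ ≤ 1 := by
      rw [norm_mul]
      simpa [hmod] using hω
    simp only [hg]
    linarith
  have hint0 : ∫ ω, g ω ∂μ = 0 := by
    have h1 : ∫ ω, ((starRingEnd ℂ) c * f ω).re ∂μ = ((starRingEnd ℂ) c * c).re := by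
      have h1' := integral_re (μ := μ) (hfint.const_mul ((starRingEnd ℂ) c))
      simp only [RCLike.re_to_complex] at h1'
      rw [h1', integral_const_mul]
    have h2 : ((starRingEnd ℂ) c * c).re = 1 := by
      rw [mul_comm, Complex.mul_conj]
      simp [Complex.normSq_eq_norm_sq, hmod]
    simp only [hg]
    rw [integral_sub (integrable_const 1) hre_int]
    simp only [integral_const, measure_univ, ENNReal.toReal_one, probReal_univ, smul_eq_mul, one_mul]
    rw [h1, h2]; ring
  have hgzero : ∀ᵐ ω ∂μ, g ω = 0 := by
    have := (integral_eq_zero_iff_of_nonneg_ae hgnn hgint).mp hint0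
    filter_upwards [this.le, hgnn] with ω h1 h2
    exact le_antisymm h1 h2
  filter_upwards [hgzero, hb] with ω h0 hω
  set z : ℂ := (starRingEnd ℂ) c * f ω with hzdef
  have hre : z.re = 1 := by simp only [hg] at h0; linarith
  have habs : ‖z‖ ≤ 1 := by
    rw [hzdef, norm_mul]; simpa [hmod] using hω
  have him : z.im = 0 := by
    have hns := Complex.sq_norm z
    have hap := Complex.normSq_apply z
    nlinarith [norm_nonneg z]
  have heq1 : z = 1 := by
    apply Complex.ext <;> simp [hre, him]
  have hkey : c * z = c := by rw [heq1, mul_one]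
  rw [hzdef, ← mul_assoc, Complex.mul_conj] at hkey
  have : (Complex.normSq c : ℂ) = 1 := by
    norm_cast
    simp [Complex.normSq_eq_norm_sq, hmod]
  rw [this, one_mul] at hkey
  exact hkey

/-- An invariant random positive definite function integrating to a character taking
values only on the boundary of the unit disk is almost surely constant, equal to that
character. -/
theorem irpdf_integrating_to_unimodular_character_is_constant
    {Γ Ω : Type*} [Group Γ] [Countable Γ]
    [MeasurableSpace Ω] [StandardBorelSpace Ω]
    (μ : Measure Ω) [IsProbabilityMeasure μ]
    [MulAction Γ Ω]
    (hmp : ∀ g : Γ, MeasurePreserving (fun ω => g • ω) μ μ)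
    (φ : Ω → Γ → ℂ)
    (hmeas : ∀ γ : Γ, Measurable fun ω => φ ω γ)
    (hpd : ∀ᵐ ω ∂μ, IsNormalizedPositiveDefinite (φ ω))
    (hinv : ∀ g h : Γ, ∀ᵐ ω ∂μ, φ (g • ω) h = φ ω (g⁻¹ * h * g))
    (hmod : ∀ γ : Γ, ‖∫ ω, φ ω γ ∂μ‖ = 1) :
    ∀ᵐ ω ∂μ, ∀ γ : Γ, φ ω γ = ∫ ω', φ ω' γ ∂μ := by
  rw [ae_all_iff]
  intro γ
  apply ae_eq_integral_of_abs_le_one μ (hmeas γ) _ (hmod γ)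
  filter_upwards [hpd] with ω hω
  exact npd_abs_le_one hω γ
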